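/- arXiv:2510.21415 — 2 statements merged into one kernel-verified Lean document; each statement's English description precedes it below -/
import Mathlib

section
/- Let C ∈ ℝ^{q×n}, D ∈ ℝ^{q×m} and set Q := CᵀC, S := CᵀD, R := DᵀD. Let X ∈ ℝ^{n×n} be a symmetric positive semidefinite solution of the DARE with W := R + BᵀXB invertible, let K := W⁻¹(BᵀXA + Sᵀ), and let B_d ∈ ℝ^{n×k}. Let d : ℤ → ℝᵏ be in ℓ2 and let v : ℤ → ℝⁿ be in ℓ2 with v_t = (A − BK)ᵀ(v_{t+1} + X B_d d_t) for all t. Suppose (x, u) and (x̄, ū) are two trajectories with x, x̄ : ℤ → ℝⁿ and u, ū : ℤ → ℝᵐ all in ℓ2, both satisfying the dynamics x_{t+1} = A x_t + B u_t + B_d d_t (resp. x̄_{t+1} = A x̄_t + B ū_t + B_d d_t) for all t, and suppose ū is given by the non-causal control law ū_t = −K x̄_t − W⁻¹ Bᵀ v_{t+1} − W⁻¹ BᵀX B_d d_t for all t. Then ∑_{t∈ℤ} ‖C x̄_t + D ū_t‖² ≤ ∑_{t∈ℤ} ‖C x_t + D u_t‖². -/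
open Matrix

/-- A two-sided sequence `x : ℤ → ℝ^p` is in ℓ2 if the family of squared Euclidean
norms `t ↦ ‖x_t‖² = x_t ⬝ᵥ x_t` is summable over ℤ. -/
def MemL2 {p : ℕ} (x : ℤ → Fin p → ℝ) : Prop :=
  Summable fun t : ℤ => x t ⬝ᵥ x t

section Aux

open Filter Topology

private lemma dflip {p r : ℕ} (M : Matrix (Fin p) (Fin r) ℝ) (a : Fin r → ℝ) (b : Fin p → ℝ) :
    (M *ᵥ a) ⬝ᵥ b = a ⬝ᵥ (Mᵀ *ᵥ b) := by
  rw [dotProduct_comm, dotProduct_mulVec, ← Matrix.mulVec_transpose, dotProduct_comm]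

/-- The completion-of-squares identity for one step of the dynamics. -/
private lemma step_ident {n m k : ℕ} {q : ℕ}
    (A X : Matrix (Fin n) (Fin n) ℝ) (B : Matrix (Fin n) (Fin m) ℝ)
    (C : Matrix (Fin q) (Fin n) ℝ) (D : Matrix (Fin q) (Fin m) ℝ)
    (W : Matrix (Fin m) (Fin m) ℝ) (B_d : Matrix (Fin n) (Fin k) ℝ)
    (hXs : Xᵀ = X) (hWs : Wᵀ = W) (hWiW : W⁻¹ * W = 1) (hWWi : W * W⁻¹ = 1)
    (hWdef : W = Dᵀ * D + Bᵀ * X * B)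
    (hE : Cᵀ * C = X - Aᵀ * X * A + (Aᵀ * X * B + Cᵀ * D) * W⁻¹ * (Bᵀ * X * A + Dᵀ * C))
    (K : Matrix (Fin m) (Fin n) ℝ) (hK : K = W⁻¹ * (Bᵀ * X * A + Dᵀ * C))
    (a p : Fin n → ℝ) (b : Fin m → ℝ) (dd : Fin k → ℝ)
    (w : Fin n → ℝ) (hw : w = B_d *ᵥ dd)
    (xp : Fin n → ℝ) (hxp : xp = A *ᵥ a + B *ᵥ b + w)
    (g : Fin m → ℝ) (hg : g = Bᵀ *ᵥ p + (Bᵀ * X * B_d) *ᵥ dd)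
    (e : Fin m → ℝ) (he : e = b + K *ᵥ a + W⁻¹ *ᵥ g)
    (vt : Fin n → ℝ) (hvt : vt = (A - B * K)ᵀ *ᵥ (p + (X * B_d) *ᵥ dd)) :
    (C *ᵥ a + D *ᵥ b) ⬝ᵥ (C *ᵥ a + D *ᵥ b)
      = e ⬝ᵥ W *ᵥ e - g ⬝ᵥ W⁻¹ *ᵥ g + w ⬝ᵥ X *ᵥ w + 2 * (p ⬝ᵥ w)
        + (a ⬝ᵥ X *ᵥ a + 2 * (vt ⬝ᵥ a)) - (xp ⬝ᵥ X *ᵥ xp + 2 * (p ⬝ᵥ xp)) := by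
  have hWis : W⁻¹ᵀ = W⁻¹ := by rw [Matrix.transpose_nonsing_inv, hWs]
  have hc1 : ∀ {p : ℕ} (M : Matrix (Fin m) (Fin p) ℝ), W⁻¹ * (W * M) = M := by
    intro _ M; rw [← Matrix.mul_assoc, hWiW, Matrix.one_mul]
  have hc2 : ∀ {p : ℕ} (M : Matrix (Fin m) (Fin p) ℝ), W * (W⁻¹ * M) = M := by
    intro _ M; rw [← Matrix.mul_assoc, hWWi, Matrix.one_mul]
  have hE' : Cᵀ * C = X - Aᵀ * (X * A)
      + (Aᵀ * (X * (B * (W⁻¹ * (Bᵀ * (X * A))))) + Aᵀ * (X * (B * (W⁻¹ * (Dᵀ * C))))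
        + (Cᵀ * (D * (W⁻¹ * (Bᵀ * (X * A)))) + Cᵀ * (D * (W⁻¹ * (Dᵀ * C))))) := by
    rw [hE]; simp only [Matrix.add_mul, Matrix.mul_add, Matrix.mul_assoc]; abel
  have hW' : Dᵀ * D = W - Bᵀ * (X * B) := by
    rw [hWdef]; simp only [Matrix.mul_assoc]; abel
  subst hK hw hxp hg he hvt
  simp only [Matrix.transpose_mul, Matrix.transpose_sub, Matrix.transpose_transpose, hXs, hWis,
    Matrix.sub_mulVec, Matrix.add_mulVec, Matrix.mulVec_add, Matrix.mulVec_sub,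
    dflip, Matrix.mulVec_mulVec,
    dotProduct_add, add_dotProduct, dotProduct_sub, sub_dotProduct,
    Matrix.transpose_add, Matrix.mul_assoc, Matrix.mul_add, Matrix.add_mul, Matrix.mul_sub,
    Matrix.sub_mul, hc1, hc2, hWiW, hWWi, Matrix.mul_one, Matrix.one_mul, Matrix.one_mulVec,
    hE', hW']
  ring_nf
  have flip : ∀ {p r : ℕ} (M : Matrix (Fin p) (Fin r) ℝ) (α : Fin p → ℝ) (β : Fin r → ℝ),
      α ⬝ᵥ M *ᵥ β = β ⬝ᵥ Mᵀ *ᵥ α := by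
    intro _ _ M α β; rw [← dflip, dotProduct_comm]
  have h1 : p ⬝ᵥ B *ᵥ b = b ⬝ᵥ Bᵀ *ᵥ p := flip B p b
  have h2 : p ⬝ᵥ (B * (W⁻¹ * (Bᵀ * (X * A)))) *ᵥ a
      = a ⬝ᵥ (Aᵀ * (X * (B * (W⁻¹ * Bᵀ)))) *ᵥ p := by
    rw [flip]; simp only [Matrix.transpose_mul, Matrix.transpose_transpose, hXs, hWis,
      Matrix.mul_assoc]
  have h3 : p ⬝ᵥ (B * (W⁻¹ * (Dᵀ * C))) *ᵥ a = a ⬝ᵥ (Cᵀ * (D * (W⁻¹ * Bᵀ))) *ᵥ p := by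
    rw [flip]; simp only [Matrix.transpose_mul, Matrix.transpose_transpose, hXs, hWis,
      Matrix.mul_assoc]
  have h4 : dd ⬝ᵥ (B_dᵀ * (X * (B * (W⁻¹ * (Bᵀ * (X * A)))))) *ᵥ a
      = a ⬝ᵥ (Aᵀ * (X * (B * (W⁻¹ * (Bᵀ * (X * B_d)))))) *ᵥ dd := by
    rw [flip]; simp only [Matrix.transpose_mul, Matrix.transpose_transpose, hXs, hWis,
      Matrix.mul_assoc]
  have h5 : dd ⬝ᵥ (B_dᵀ * (X * (B * (W⁻¹ * (Dᵀ * C))))) *ᵥ a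
      = a ⬝ᵥ (Cᵀ * (D * (W⁻¹ * (Bᵀ * (X * B_d))))) *ᵥ dd := by
    rw [flip]; simp only [Matrix.transpose_mul, Matrix.transpose_transpose, hXs, hWis,
      Matrix.mul_assoc]
  have h6 : dd ⬝ᵥ (B_dᵀ * (X * A)) *ᵥ a = a ⬝ᵥ (Aᵀ * (X * B_d)) *ᵥ dd := by
    rw [flip]; simp only [Matrix.transpose_mul, Matrix.transpose_transpose, hXs, hWis,
      Matrix.mul_assoc]
  linarith [h1, h2, h3, h4, h5, h6]

private lemma icc_telescope (f : ℤ → ℝ) (N : ℕ) :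
    ∑ t ∈ Finset.Icc (-(N : ℤ)) N, (f t - f (t + 1)) = f (-(N : ℤ)) - f (N + 1) := by
  induction N with
  | zero => simp
  | succ N ih =>
    have h1 : (-(N + 1 : ℕ) : ℤ) = -(N : ℤ) - 1 := by push_cast; ring
    have h2 : ((N + 1 : ℕ) : ℤ) = (N : ℤ) + 1 := by push_cast; ring
    rw [h1, h2]
    have hset : Finset.Icc (-(N : ℤ) - 1) ((N : ℤ) + 1)
        = insert (-(N : ℤ) - 1) (insert ((N : ℤ) + 1) (Finset.Icc (-(N : ℤ)) N)) := by
      ext t; simp only [Finset.mem_Icc, Finset.mem_insert]; omega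
    have m1 : ((N : ℤ) + 1) ∉ Finset.Icc (-(N : ℤ)) (N : ℤ) := by
      simp only [Finset.mem_Icc]; omega
    have m2 : (-(N : ℤ) - 1) ∉ insert ((N : ℤ) + 1) (Finset.Icc (-(N : ℤ)) (N : ℤ)) := by
      simp only [Finset.mem_Icc, Finset.mem_insert]; omega
    rw [hset, Finset.sum_insert m2, Finset.sum_insert m1, ih]
    have e1 : -(N : ℤ) - 1 + 1 = -(N : ℤ) := by ring
    rw [e1]; ring

private lemma tsum_telescope_zero (f : ℤ → ℝ)
    (hs : Summable (fun t : ℤ => f t - f (t + 1)))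
    (h0 : Tendsto f cofinite (nhds 0)) :
    ∑' t : ℤ, (f t - f (t + 1)) = 0 := by
  have hmono : Monotone (fun N : ℕ => Finset.Icc (-(N : ℤ)) N) := by
    intro a b hab
    apply Finset.Icc_subset_Icc <;> omega
  have hfin : Tendsto (fun N : ℕ => Finset.Icc (-(N : ℤ)) N) atTop atTop :=
    Filter.tendsto_atTop_finset_of_monotone hmono
      (fun x => ⟨x.natAbs, by simp only [Finset.mem_Icc]; omega⟩)
  have h1 : Tendsto (fun N : ℕ => ∑ t ∈ Finset.Icc (-(N : ℤ)) N, (f t - f (t + 1)))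
      atTop (nhds (∑' t : ℤ, (f t - f (t + 1)))) := hs.hasSum.comp hfin
  have hneg : Tendsto (fun N : ℕ => f (-(N : ℤ))) atTop (nhds 0) := by
    apply h0.comp
    rw [← Nat.cofinite_eq_atTop]
    exact Function.Injective.tendsto_cofinite (fun a b h => by omega)
  have hpos : Tendsto (fun N : ℕ => f ((N : ℤ) + 1)) atTop (nhds 0) := by
    apply h0.comp
    rw [← Nat.cofinite_eq_atTop]
    exact Function.Injective.tendsto_cofinite (fun a b h => by omega)
  have h2 : Tendsto (fun N : ℕ => ∑ t ∈ Finset.Icc (-(N : ℤ)) N, (f t - f (t + 1)))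
      atTop (nhds 0) := by
    simp only [icc_telescope]
    simpa using hneg.sub hpos
  exact tendsto_nhds_unique h1 h2

private lemma memL2_mulVec {p r : ℕ} (M : Matrix (Fin p) (Fin r) ℝ) {x : ℤ → Fin r → ℝ}
    (hx : MemL2 x) : MemL2 (fun t => M *ᵥ x t) := by
  have key : ∀ t, (M *ᵥ x t) ⬝ᵥ (M *ᵥ x t) ≤ (∑ i, ∑ j, (M i j) ^ 2) * (x t ⬝ᵥ x t) := by
    intro t
    have h1 : ∀ i : Fin p, (M *ᵥ x t) i * (M *ᵥ x t) i
        ≤ (∑ j, (M i j) ^ 2) * (x t ⬝ᵥ x t) := by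
      intro i
      have := Finset.sum_mul_sq_le_sq_mul_sq Finset.univ (fun j => M i j) (fun j => x t j)
      calc (M *ᵥ x t) i * (M *ᵥ x t) i = (∑ j, M i j * x t j) ^ 2 := by
            simp [Matrix.mulVec, dotProduct, sq]
        _ ≤ (∑ j, (M i j) ^ 2) * (∑ j, (x t j) ^ 2) := this
        _ = (∑ j, (M i j) ^ 2) * (x t ⬝ᵥ x t) := by
            simp [dotProduct, sq]
    calc (M *ᵥ x t) ⬝ᵥ (M *ᵥ x t) = ∑ i, (M *ᵥ x t) i * (M *ᵥ x t) i := rfl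
      _ ≤ ∑ i, (∑ j, (M i j) ^ 2) * (x t ⬝ᵥ x t) := Finset.sum_le_sum (fun i _ => h1 i)
      _ = (∑ i, ∑ j, (M i j) ^ 2) * (x t ⬝ᵥ x t) := by rw [Finset.sum_mul]
  exact Summable.of_nonneg_of_le
    (fun t => Finset.sum_nonneg (fun i _ => mul_self_nonneg _))
    key (hx.mul_left _)

private lemma memL2_add {p : ℕ} {f g : ℤ → Fin p → ℝ} (hf : MemL2 f) (hg : MemL2 g) :
    MemL2 (fun t => f t + g t) := by
  apply Summable.of_nonneg_of_le
    (fun t => Finset.sum_nonneg (fun i _ => mul_self_nonneg _))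
    (fun t => ?_) ((hf.mul_left 2).add (hg.mul_left 2))
  calc (f t + g t) ⬝ᵥ (f t + g t) = ∑ i, (f t i + g t i) * (f t i + g t i) := rfl
    _ ≤ ∑ i, (2 * (f t i * f t i) + 2 * (g t i * g t i)) :=
        Finset.sum_le_sum (fun i _ => by nlinarith [sq_nonneg (f t i - g t i)])
    _ = 2 * (f t ⬝ᵥ f t) + 2 * (g t ⬝ᵥ g t) := by
        rw [dotProduct, dotProduct, Finset.mul_sum, Finset.mul_sum,
          ← Finset.sum_add_distrib]

private lemma memL2_shift {p : ℕ} {x : ℤ → Fin p → ℝ} (hx : MemL2 x) :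
    MemL2 (fun t => x (t + 1)) := by
  have h := ((Equiv.addRight (1 : ℤ)).summable_iff
    (f := fun t : ℤ => x t ⬝ᵥ x t)).mpr hx
  exact h

private lemma summable_dot {p : ℕ} {f g : ℤ → Fin p → ℝ} (hf : MemL2 f) (hg : MemL2 g) :
    Summable (fun t => f t ⬝ᵥ g t) := by
  rw [← summable_abs_iff]
  apply Summable.of_nonneg_of_le (fun t => abs_nonneg _) (fun t => ?_)
    ((hf.add hg).mul_left (1 / 2))
  calc |f t ⬝ᵥ g t| ≤ ∑ i, |f t i * g t i| := Finset.abs_sum_le_sum_abs _ _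
    _ ≤ ∑ i, (1 / 2) * (f t i * f t i + g t i * g t i) := by
        apply Finset.sum_le_sum
        intro i _
        rw [abs_mul]
        nlinarith [sq_nonneg (|f t i| - |g t i|), sq_abs (f t i), sq_abs (g t i),
          abs_nonneg (f t i), abs_nonneg (g t i)]
    _ = 1 / 2 * (f t ⬝ᵥ f t + g t ⬝ᵥ g t) := by
        rw [dotProduct, dotProduct, ← Finset.sum_add_distrib,
          Finset.mul_sum]

end Aux

/-- Optimality of the non-causal control law. With `Q = CᵀC`, `S = CᵀD`,
`R = DᵀD`, a symmetric PSD DARE solution `X`, gain `K = W⁻¹(BᵀXA + Sᵀ)`, an ℓ2 adjoint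
sequence `v`, and two ℓ2 trajectories `(x,u)` and `(x̄,ū)` of the same dynamics where
`ū_t = -K x̄_t - W⁻¹ Bᵀ v_{t+1} - W⁻¹ BᵀX B_d d_t`, the cost of `(x̄,ū)` is no larger
than that of `(x,u)`. -/
theorem noncausal_controller_optimal {n m k q : ℕ}
    (A : Matrix (Fin n) (Fin n) ℝ) (B : Matrix (Fin n) (Fin m) ℝ)
    (C : Matrix (Fin q) (Fin n) ℝ) (D : Matrix (Fin q) (Fin m) ℝ)
    (Q : Matrix (Fin n) (Fin n) ℝ) (S : Matrix (Fin n) (Fin m) ℝ)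
    (R : Matrix (Fin m) (Fin m) ℝ)
    (hQdef : Q = Cᵀ * C) (hSdef : S = Cᵀ * D) (hRdef : R = Dᵀ * D)
    (X : Matrix (Fin n) (Fin n) ℝ) (hXsymm : X.IsSymm) (hXpsd : X.PosSemidef)
    (W : Matrix (Fin m) (Fin m) ℝ) (hWdef : W = R + Bᵀ * X * B) (hW : IsUnit W)
    (hDARE : X = Aᵀ * X * A + Q - (Aᵀ * X * B + S) * W⁻¹ * (Aᵀ * X * B + S)ᵀ)
    (K : Matrix (Fin m) (Fin n) ℝ) (hKdef : K = W⁻¹ * (Bᵀ * X * A + Sᵀ))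
    (B_d : Matrix (Fin n) (Fin k) ℝ)
    (d : ℤ → Fin k → ℝ) (hd : MemL2 d)
    (v : ℤ → Fin n → ℝ) (hv : MemL2 v)
    (hadj : ∀ t : ℤ, v t = (A - B * K)ᵀ.mulVec (v (t + 1) + (X * B_d).mulVec (d t)))
    (x xbar : ℤ → Fin n → ℝ) (u ubar : ℤ → Fin m → ℝ)
    (hx : MemL2 x) (hxbar : MemL2 xbar) (hu : MemL2 u) (hubar : MemL2 ubar)
    (hdyn : ∀ t : ℤ, x (t + 1) = A.mulVec (x t) + B.mulVec (u t) + B_d.mulVec (d t))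
    (hdynbar : ∀ t : ℤ,
      xbar (t + 1) = A.mulVec (xbar t) + B.mulVec (ubar t) + B_d.mulVec (d t))
    (hlaw : ∀ t : ℤ,
      ubar t = -(K.mulVec (xbar t)) - W⁻¹.mulVec (Bᵀ.mulVec (v (t + 1))) -
        W⁻¹.mulVec ((Bᵀ * X * B_d).mulVec (d t))) :
    (∑' t : ℤ, (C.mulVec (xbar t) + D.mulVec (ubar t)) ⬝ᵥ
        (C.mulVec (xbar t) + D.mulVec (ubar t))) ≤
      (∑' t : ℤ, (C.mulVec (x t) + D.mulVec (u t)) ⬝ᵥ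
        (C.mulVec (x t) + D.mulVec (u t))) := by
  have hXs : Xᵀ = X := hXsymm
  have hdet : IsUnit W.det := (Matrix.isUnit_iff_isUnit_det W).1 hW
  have hWiW : W⁻¹ * W = 1 := Matrix.nonsing_inv_mul W hdet
  have hWWi : W * W⁻¹ = 1 := Matrix.mul_nonsing_inv W hdet
  have hWdef' : W = Dᵀ * D + Bᵀ * X * B := by rw [hWdef, hRdef]
  have hWs : Wᵀ = W := by
    rw [hWdef']
    simp [Matrix.transpose_add, Matrix.transpose_mul, hXs, Matrix.mul_assoc]
  have hK : K = W⁻¹ * (Bᵀ * X * A + Dᵀ * C) := by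
    rw [hKdef, hSdef, Matrix.transpose_mul, Matrix.transpose_transpose]
  have hTt : (Aᵀ * X * B + Cᵀ * D)ᵀ = Bᵀ * X * A + Dᵀ * C := by
    simp [Matrix.transpose_add, Matrix.transpose_mul, hXs, Matrix.mul_assoc]
  have hDARE' : X = Aᵀ * X * A + Cᵀ * C
      - (Aᵀ * X * B + Cᵀ * D) * W⁻¹ * (Bᵀ * X * A + Dᵀ * C) := by
    rw [← hTt, ← hSdef, ← hQdef]; exact hDARE
  have hE : Cᵀ * C = X - Aᵀ * X * A
      + (Aᵀ * X * B + Cᵀ * D) * W⁻¹ * (Bᵀ * X * A + Dᵀ * C) := by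
    have h2 : Cᵀ * C = (Aᵀ * X * A + Cᵀ * C
        - (Aᵀ * X * B + Cᵀ * D) * W⁻¹ * (Bᵀ * X * A + Dᵀ * C)) - Aᵀ * X * A
        + (Aᵀ * X * B + Cᵀ * D) * W⁻¹ * (Bᵀ * X * A + Dᵀ * C) := by abel
    rw [← hDARE'] at h2; exact h2
  have hWpsd : W.PosSemidef := by
    rw [hWdef']
    apply Matrix.PosSemidef.add
    · have := Matrix.posSemidef_conjTranspose_mul_self D; simpa using this
    · have := hXpsd.conjTranspose_mul_mul_same B; simpa using this
  -- abbreviations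
  set e : ℤ → Fin m → ℝ :=
    fun t => u t + K *ᵥ x t + W⁻¹ *ᵥ (Bᵀ *ᵥ v (t + 1) + (Bᵀ * X * B_d) *ᵥ d t) with he
  set Δ : ℤ → ℝ := fun t => x t ⬝ᵥ X *ᵥ x t + 2 * (v t ⬝ᵥ x t)
    - (xbar t ⬝ᵥ X *ᵥ xbar t + 2 * (v t ⬝ᵥ xbar t)) with hΔ
  -- the key pointwise identity
  have IDENT : ∀ t : ℤ,
      (C *ᵥ x t + D *ᵥ u t) ⬝ᵥ (C *ᵥ x t + D *ᵥ u t)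
        = (C *ᵥ xbar t + D *ᵥ ubar t) ⬝ᵥ (C *ᵥ xbar t + D *ᵥ ubar t)
          + e t ⬝ᵥ W *ᵥ e t + (Δ t - Δ (t + 1)) := by
    intro t
    have h1 := step_ident A X B C D W B_d hXs hWs hWiW hWWi hWdef' hE K hK
      (x t) (v (t + 1)) (u t) (d t) (B_d *ᵥ d t) rfl (x (t + 1)) (hdyn t)
      (Bᵀ *ᵥ v (t + 1) + (Bᵀ * X * B_d) *ᵥ d t) rfl (e t) rfl (v t) (hadj t)
    have hze : ubar t + K *ᵥ xbar t
        + W⁻¹ *ᵥ (Bᵀ *ᵥ v (t + 1) + (Bᵀ * X * B_d) *ᵥ d t) = 0 := by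
      rw [hlaw t, Matrix.mulVec_add]; abel
    have h2 := step_ident A X B C D W B_d hXs hWs hWiW hWWi hWdef' hE K hK
      (xbar t) (v (t + 1)) (ubar t) (d t) (B_d *ᵥ d t) rfl (xbar (t + 1)) (hdynbar t)
      (Bᵀ *ᵥ v (t + 1) + (Bᵀ * X * B_d) *ᵥ d t) rfl
      (ubar t + K *ᵥ xbar t + W⁻¹ *ᵥ (Bᵀ *ᵥ v (t + 1) + (Bᵀ * X * B_d) *ᵥ d t)) rfl
      (v t) (hadj t)
    rw [hze] at h2
    simp only [Matrix.mulVec_zero, dotProduct_zero, zero_dotProduct] at h2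
    simp only [hΔ, he]
    linarith [h1, h2]
  -- summability facts
  have Sz : Summable (fun t : ℤ =>
      (C *ᵥ x t + D *ᵥ u t) ⬝ᵥ (C *ᵥ x t + D *ᵥ u t)) :=
    memL2_add (memL2_mulVec C hx) (memL2_mulVec D hu)
  have Szb : Summable (fun t : ℤ =>
      (C *ᵥ xbar t + D *ᵥ ubar t) ⬝ᵥ (C *ᵥ xbar t + D *ᵥ ubar t)) :=
    memL2_add (memL2_mulVec C hxbar) (memL2_mulVec D hubar)
  have Sg : MemL2 (fun t : ℤ => Bᵀ *ᵥ v (t + 1) + (Bᵀ * X * B_d) *ᵥ d t) :=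
    memL2_add (memL2_mulVec Bᵀ (memL2_shift hv)) (memL2_mulVec (Bᵀ * X * B_d) hd)
  have Se : MemL2 e :=
    memL2_add (memL2_add hu (memL2_mulVec K hx)) (memL2_mulVec W⁻¹ Sg)
  have SeW : Summable (fun t : ℤ => e t ⬝ᵥ W *ᵥ e t) :=
    summable_dot Se (memL2_mulVec W Se)
  have SΔ : Summable Δ := by
    apply Summable.sub
    · exact (summable_dot hx (memL2_mulVec X hx)).add ((summable_dot hv hx).mul_left 2)
    · exact (summable_dot hxbar (memL2_mulVec X hxbar)).add
        ((summable_dot hv hxbar).mul_left 2)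
  have Stel : Summable (fun t : ℤ => Δ t - Δ (t + 1)) := by
    have hfun : (fun t : ℤ => Δ t - Δ (t + 1))
        = fun t : ℤ => (C *ᵥ x t + D *ᵥ u t) ⬝ᵥ (C *ᵥ x t + D *ᵥ u t)
          - (C *ᵥ xbar t + D *ᵥ ubar t) ⬝ᵥ (C *ᵥ xbar t + D *ᵥ ubar t)
          - e t ⬝ᵥ W *ᵥ e t := funext (fun t => by linarith [IDENT t])
    rw [hfun]
    exact (Sz.sub Szb).sub SeW
  have hTel : ∑' t : ℤ, (Δ t - Δ (t + 1)) = 0 :=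
    tsum_telescope_zero Δ Stel SΔ.tendsto_cofinite_zero
  have hEnn : 0 ≤ ∑' t : ℤ, e t ⬝ᵥ W *ᵥ e t := by
    apply tsum_nonneg
    intro t
    have := hWpsd.dotProduct_mulVec_nonneg (e t)
    simpa using this
  have key : (∑' t : ℤ, (C *ᵥ x t + D *ᵥ u t) ⬝ᵥ (C *ᵥ x t + D *ᵥ u t))
      = (∑' t : ℤ, (C *ᵥ xbar t + D *ᵥ ubar t) ⬝ᵥ (C *ᵥ xbar t + D *ᵥ ubar t))
        + ((∑' t : ℤ, e t ⬝ᵥ W *ᵥ e t) + ∑' t : ℤ, (Δ t - Δ (t + 1))) := by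
    calc (∑' t : ℤ, (C *ᵥ x t + D *ᵥ u t) ⬝ᵥ (C *ᵥ x t + D *ᵥ u t))
        = ∑' t : ℤ, ((C *ᵥ xbar t + D *ᵥ ubar t) ⬝ᵥ (C *ᵥ xbar t + D *ᵥ ubar t)
            + (e t ⬝ᵥ W *ᵥ e t + (Δ t - Δ (t + 1)))) :=
          tsum_congr (fun t => by linarith [IDENT t])
      _ = (∑' t : ℤ, (C *ᵥ xbar t + D *ᵥ ubar t) ⬝ᵥ (C *ᵥ xbar t + D *ᵥ ubar t))
            + ∑' t : ℤ, (e t ⬝ᵥ W *ᵥ e t + (Δ t - Δ (t + 1))) :=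
          Summable.tsum_add Szb (SeW.add Stel)
      _ = (∑' t : ℤ, (C *ᵥ xbar t + D *ᵥ ubar t) ⬝ᵥ (C *ᵥ xbar t + D *ᵥ ubar t))
            + ((∑' t : ℤ, e t ⬝ᵥ W *ᵥ e t) + ∑' t : ℤ, (Δ t - Δ (t + 1))) := by
          rw [Summable.tsum_add SeW Stel]
  linarith [key, hEnn, hTel]
end

section
/- Let A ∈ ℝ^{n×n} have spectral radius strictly less than 1, let B ∈ ℝ^{n×k}, and let d : ℤ → ℝᵏ be in ℓ2. Then for every t ∈ ℤ the series x_t := ∑_{j=0}^{∞} A^j B d_{t−1−j} converges absolutely, the resulting sequence x : ℤ → ℝⁿ is in ℓ2 and satisfies x_{t+1} = A x_t + B d_t for all t ∈ ℤ, and there is a constant γ ≥ 0, independent of d, such that ‖x‖₂ ≤ γ ‖d‖₂. -/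
open Matrix
open scoped ENNReal

section PowBound
attribute [local instance] Matrix.linftyOpNormedAddCommGroup Matrix.linftyOpNormedRing
  Matrix.linftyOpNormedAlgebra

private lemma entry_le_linfty {m l : ℕ} (X : Matrix (Fin m) (Fin l) ℂ) (i : Fin m) (j : Fin l) :
    ‖X i j‖ ≤ ‖X‖ := by
  have h : ‖X i j‖₊ ≤ ‖X‖₊ := by
    rw [Matrix.linfty_opNNNorm_def]
    refine le_trans (Finset.single_le_sum (f := fun a => ‖X i a‖₊) (fun a _ => zero_le)
      (Finset.mem_univ j)) ?_
    exact Finset.le_sup (f := fun a => ∑ b : Fin l, ‖X a b‖₊) (Finset.mem_univ i)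
  exact_mod_cast h

private lemma pow_entry_bound {n : ℕ} (A : Matrix (Fin n) (Fin n) ℝ)
    (hA : spectralRadius ℂ (A.map Complex.ofReal) < 1) :
    ∃ c r : ℝ, 0 ≤ c ∧ 0 ≤ r ∧ r < 1 ∧ ∀ (j : ℕ) (i i' : Fin n),
      |(A ^ j) i i'| ≤ c * r ^ j := by
  set M := A.map Complex.ofReal with hM
  have gel := spectrum.pow_norm_pow_one_div_tendsto_nhds_spectralRadius M
  set ρ := spectralRadius ℂ M with hρdef
  have hρtop : ρ ≠ ⊤ := hA.ne_top
  set r : ℝ := (ρ.toReal + 1) / 2 with hr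
  have hρ0 : (0:ℝ) ≤ ρ.toReal := ENNReal.toReal_nonneg
  have hρ1 : ρ.toReal < 1 := by
    have := ENNReal.toReal_lt_toReal hρtop (by norm_num : (1:ℝ≥0∞) ≠ ⊤) |>.mpr hA
    simpa using this
  have hr0 : 0 < r := by positivity
  have hr1 : r < 1 := by rw [hr]; linarith
  have hρr : ρ < ENNReal.ofReal r := by
    rw [ENNReal.lt_ofReal_iff_toReal_lt hρtop, hr]; linarith
  have hev : ∀ᶠ j in Filter.atTop, ENNReal.ofReal (‖M ^ j‖ ^ (1 / (j:ℕ) : ℝ)) < ENNReal.ofReal r :=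
    gel.eventually_lt_const hρr
  obtain ⟨N, hN⟩ := Filter.eventually_atTop.mp hev
  have key : ∀ j, max N 1 ≤ j → ‖M ^ j‖ ≤ r ^ j := by
    intro j hj
    have hj1 : j ≠ 0 := by omega
    have h := hN j (le_trans (le_max_left _ _) hj)
    have h2 : ‖M ^ j‖ ^ (1 / (j:ℕ) : ℝ) < r :=
      (ENNReal.ofReal_lt_ofReal_iff hr0).mp h
    have h3 : (‖M ^ j‖ ^ ((j:ℝ))⁻¹ : ℝ) ^ j = ‖M ^ j‖ :=
      Real.rpow_inv_natCast_pow (norm_nonneg _) hj1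
    calc ‖M ^ j‖ = (‖M ^ j‖ ^ ((j:ℝ))⁻¹ : ℝ) ^ j := h3.symm
      _ ≤ r ^ j := by
          apply pow_le_pow_left₀ (Real.rpow_nonneg (norm_nonneg _) _)
          rw [one_div] at h2; exact h2.le
  set N' := max N 1 with hN'
  set c : ℝ := 1 + ∑ i ∈ Finset.range N', ‖M ^ i‖ / r ^ i with hc
  have hc1 : (1:ℝ) ≤ c := by
    rw [hc]
    have : (0:ℝ) ≤ ∑ i ∈ Finset.range N', ‖M ^ i‖ / r ^ i :=
      Finset.sum_nonneg fun i _ => div_nonneg (norm_nonneg _) (by positivity)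
    linarith
  have hnorm : ∀ j, ‖M ^ j‖ ≤ c * r ^ j := by
    intro j
    rcases lt_or_ge j N' with hjN | hjN
    · have h1 : ‖M ^ j‖ / r ^ j ≤ c := by
        rw [hc]
        have := Finset.single_le_sum (f := fun i => ‖M ^ i‖ / r ^ i)
          (fun i _ => div_nonneg (norm_nonneg _) (by positivity)) (Finset.mem_range.mpr hjN)
        linarith
      calc ‖M ^ j‖ = (‖M ^ j‖ / r ^ j) * r ^ j := by field_simp
        _ ≤ c * r ^ j := mul_le_mul_of_nonneg_right h1 (by positivity)
    · calc ‖M ^ j‖ ≤ r ^ j := key j hjN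
        _ ≤ c * r ^ j := by nlinarith [pow_nonneg hr0.le j]
  refine ⟨c, r, by linarith, hr0.le, hr1, fun j i i' => ?_⟩
  have hmap : M ^ j = (A ^ j).map Complex.ofReal := by
    have : (Complex.ofRealHom.mapMatrix (A ^ j) : Matrix (Fin n) (Fin n) ℂ)
        = (Complex.ofRealHom.mapMatrix A) ^ j := map_pow _ _ _
    exact this.symm
  have h1 : |(A ^ j) i i'| = ‖(M ^ j) i i'‖ := by
    rw [hmap]; simp [Matrix.map_apply]
  rw [h1]
  exact le_trans (entry_le_linfty _ i i') (hnorm j)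
end PowBound

/-- Euclidean norm of a vector in `ℝ^p`. -/
noncomputable def eNorm {p : ℕ} (x : Fin p → ℝ) : ℝ :=
  Real.sqrt (x ⬝ᵥ x)

/-- The ℓ2 norm of a two-sided sequence. -/
noncomputable def l2Norm {p : ℕ} (x : ℤ → Fin p → ℝ) : ℝ :=
  Real.sqrt (∑' t : ℤ, x t ⬝ᵥ x t)

private lemma dot_self_nonneg' {p : ℕ} (x : Fin p → ℝ) : 0 ≤ x ⬝ᵥ x :=
  Finset.sum_nonneg fun _ _ => mul_self_nonneg _

private lemma eNorm_nonneg {p : ℕ} (x : Fin p → ℝ) : 0 ≤ eNorm x := Real.sqrt_nonneg _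

private lemma sq_eNorm {p : ℕ} (x : Fin p → ℝ) : eNorm x ^ 2 = x ⬝ᵥ x :=
  Real.sq_sqrt (dot_self_nonneg' x)

private noncomputable def Eqv (p : ℕ) : EuclideanSpace ℝ (Fin p) ≃L[ℝ] (Fin p → ℝ) :=
  PiLp.continuousLinearEquiv 2 ℝ _

private lemma eNorm_eq {p : ℕ} (x : Fin p → ℝ) : eNorm x = ‖(Eqv p).symm x‖ := by
  rw [EuclideanSpace.norm_eq]
  unfold eNorm dotProduct
  congr 1
  refine Finset.sum_congr rfl fun i _ => ?_
  have hco : ((Eqv p).symm x) i = x i := rfl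
  rw [hco, Real.norm_eq_abs, sq_abs, sq]

private lemma abs_apply_le_eNorm {p : ℕ} (x : Fin p → ℝ) (i : Fin p) : |x i| ≤ eNorm x := by
  have : x i * x i ≤ x ⬝ᵥ x :=
    Finset.single_le_sum (f := fun j => x j * x j) (fun j _ => mul_self_nonneg _)
      (Finset.mem_univ i)
  calc |x i| = Real.sqrt (x i * x i) := (Real.sqrt_mul_self_eq_abs _).symm
    _ ≤ eNorm x := Real.sqrt_le_sqrt this

private lemma supnorm_le_eNorm {p : ℕ} (x : Fin p → ℝ) : ‖x‖ ≤ eNorm x := by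
  apply pi_norm_le_iff_of_nonneg (eNorm_nonneg x) |>.mpr
  intro i
  simpa [Real.norm_eq_abs] using abs_apply_le_eNorm x i

private lemma eNorm_le_of_forall {p : ℕ} (x : Fin p → ℝ) {b : ℝ} (hb : 0 ≤ b)
    (h : ∀ i, |x i| ≤ b) : eNorm x ≤ p * b := by
  have h1 : x ⬝ᵥ x ≤ p * b ^ 2 := by
    calc x ⬝ᵥ x ≤ ∑ _i : Fin p, b ^ 2 := by
          apply Finset.sum_le_sum
          intro i _
          have h2 := mul_self_le_mul_self (abs_nonneg (x i)) (h i)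
          rw [abs_mul_abs_self] at h2
          nlinarith
      _ = p * b ^ 2 := by simp [mul_comm]
  have hpp : (p:ℝ) ≤ (p:ℝ) ^ 2 := by exact_mod_cast Nat.le_self_pow two_ne_zero p
  calc eNorm x ≤ Real.sqrt ((p : ℝ) * b ^ 2) := Real.sqrt_le_sqrt h1
    _ = Real.sqrt p * b := by
        rw [Real.sqrt_mul (Nat.cast_nonneg _), Real.sqrt_sq hb]
    _ ≤ p * b := by
        refine mul_le_mul_of_nonneg_right ?_ hb
        calc Real.sqrt p ≤ Real.sqrt ((p:ℝ)^2) := Real.sqrt_le_sqrt hpp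
          _ = p := Real.sqrt_sq (Nat.cast_nonneg _)

private lemma mulVec_eNorm_le {p q : ℕ} (M : Matrix (Fin p) (Fin q) ℝ) {c : ℝ} (hc : 0 ≤ c)
    (h : ∀ i j, |M i j| ≤ c) (v : Fin q → ℝ) :
    eNorm (M.mulVec v) ≤ (p * (q * c)) * eNorm v := by
  have hb : 0 ≤ (q * c) * eNorm v := mul_nonneg (mul_nonneg (Nat.cast_nonneg _) hc) (eNorm_nonneg v)
  have key : ∀ i, |M.mulVec v i| ≤ (q * c) * eNorm v := by
    intro i
    calc |M.mulVec v i| = |∑ j, M i j * v j| := rfl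
      _ ≤ ∑ j, |M i j * v j| := Finset.abs_sum_le_sum_abs _ _
      _ ≤ ∑ _j : Fin q, c * eNorm v := by
          apply Finset.sum_le_sum
          intro j _
          rw [abs_mul]
          exact mul_le_mul (h i j) (abs_apply_le_eNorm v j) (abs_nonneg _) hc
      _ = (q * c) * eNorm v := by simp [Finset.sum_const, Finset.card_univ]; ring
  calc eNorm (M.mulVec v) ≤ p * ((q * c) * eNorm v) := eNorm_le_of_forall _ hb key
    _ = (p * (q * c)) * eNorm v := by ring

private lemma tsum_cauchy_schwarz (f g : ℕ → ℝ)
    (hf : Summable fun j => f j ^ 2) (hg : Summable fun j => g j ^ 2)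
    (hfg : Summable fun j => f j * g j) :
    ∑' j, f j * g j ≤ Real.sqrt (∑' j, f j ^ 2) * Real.sqrt (∑' j, g j ^ 2) := by
  refine Summable.tsum_le_of_sum_le hfg fun s => ?_
  refine le_trans (Real.sum_mul_le_sqrt_mul_sqrt s f g) ?_
  have h1 : ∑ i ∈ s, f i ^ 2 ≤ ∑' j, f j ^ 2 := Summable.sum_le_tsum s (fun i _ => sq_nonneg _) hf
  have h2 : ∑ i ∈ s, g i ^ 2 ≤ ∑' j, g j ^ 2 := Summable.sum_le_tsum s (fun i _ => sq_nonneg _) hg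
  exact mul_le_mul (Real.sqrt_le_sqrt h1) (Real.sqrt_le_sqrt h2) (Real.sqrt_nonneg _)
    (Real.sqrt_nonneg _)

set_option maxHeartbeats 2000000 in
/-- If `A` has spectral radius `< 1` and `d ∈ ℓ2`, the series
`x_t = ∑_{j=0}^∞ A^j B d_{t-1-j}` converges absolutely, `x` is in ℓ2, satisfies
`x_{t+1} = A x_t + B d_t`, and there is a constant `γ ≥ 0` independent of `d`
with `‖x‖₂ ≤ γ ‖d‖₂`. -/
theorem stable_convolution_solution {n k : ℕ}
    (A : Matrix (Fin n) (Fin n) ℝ)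
    (hA : spectralRadius ℂ (A.map Complex.ofReal) < 1)
    (B : Matrix (Fin n) (Fin k) ℝ) :
    ∃ γ : ℝ, 0 ≤ γ ∧ ∀ d : ℤ → Fin k → ℝ, MemL2 d →
      (∀ t : ℤ, Summable fun j : ℕ =>
          eNorm ((A ^ j).mulVec (B.mulVec (d (t - 1 - j))))) ∧
      MemL2 (fun t : ℤ => ∑' j : ℕ, (A ^ j).mulVec (B.mulVec (d (t - 1 - j)))) ∧
      (∀ t : ℤ,
        (∑' j : ℕ, (A ^ j).mulVec (B.mulVec (d (t + 1 - 1 - j)))) =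
          A.mulVec (∑' j : ℕ, (A ^ j).mulVec (B.mulVec (d (t - 1 - j)))) +
            B.mulVec (d t)) ∧
      l2Norm (fun t : ℤ => ∑' j : ℕ, (A ^ j).mulVec (B.mulVec (d (t - 1 - j)))) ≤
        γ * l2Norm d := by
  obtain ⟨c, r, hc0, hr0, hr1, hAc⟩ := pow_entry_bound A hA
  -- entry bound for B
  set cB : ℝ := ∑ i : Fin n, ∑ j : Fin k, |B i j| with hcB
  have hcB0 : 0 ≤ cB := Finset.sum_nonneg fun _ _ => Finset.sum_nonneg fun _ _ => abs_nonneg _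
  have hBent : ∀ i j, |B i j| ≤ cB := by
    intro i j
    refine le_trans (Finset.single_le_sum (f := fun j' => |B i j'|)
      (fun _ _ => abs_nonneg _) (Finset.mem_univ j)) ?_
    exact Finset.single_le_sum (f := fun i' => ∑ j' : Fin k, |B i' j'|)
      (fun i' _ => Finset.sum_nonneg fun _ _ => abs_nonneg _) (Finset.mem_univ i)
  set KB : ℝ := n * (k * cB) with hKB
  have hKB0 : 0 ≤ KB := by positivity
  set K : ℝ := (n * (n * c)) * KB with hK
  have hK0 : 0 ≤ K := by positivity
  -- key pointwise bound, independent of d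
  have hkeyv : ∀ (v : Fin k → ℝ) (j : ℕ),
      eNorm ((A ^ j).mulVec (B.mulVec v)) ≤ K * r ^ j * eNorm v := by
    intro v j
    have hcr : (0:ℝ) ≤ c * r ^ j := by positivity
    have h1 := mulVec_eNorm_le (A ^ j) hcr (fun i i' => hAc j i i') (B.mulVec v)
    have h2 := mulVec_eNorm_le B hcB0 hBent v
    calc eNorm ((A ^ j).mulVec (B.mulVec v))
        ≤ (n * (n * (c * r ^ j))) * eNorm (B.mulVec v) := h1
      _ ≤ (n * (n * (c * r ^ j))) * ((n * (k * cB)) * eNorm v) := by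
          refine mul_le_mul_of_nonneg_left ?_ (by positivity)
          simpa [hKB] using h2
      _ = K * r ^ j * eNorm v := by rw [hK, hKB]; ring
  have hgeo : Summable fun j : ℕ => r ^ j := summable_geometric_of_lt_one hr0 hr1
  have hKgeo : Summable fun j : ℕ => K * r ^ j := hgeo.mul_left K
  set S : ℝ := ∑' j : ℕ, K * r ^ j with hS
  have hS0 : 0 ≤ S := tsum_nonneg fun j => by positivity
  refine ⟨S, hS0, fun d hd => ?_⟩
  -- facts about d
  set q : ℤ → ℝ := fun s => d s ⬝ᵥ d s with hqdef
  have hq0 : ∀ s, 0 ≤ q s := fun s => dot_self_nonneg' _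
  set Q : ℝ := ∑' s : ℤ, q s with hQ
  have hQ0 : 0 ≤ Q := tsum_nonneg fun s => hq0 s
  have hqQ : ∀ s, q s ≤ Q := fun s => Summable.le_tsum hd s fun _ _ => hq0 _
  have hdQ : ∀ s, eNorm (d s) ≤ Real.sqrt Q := fun s => Real.sqrt_le_sqrt (hqQ s)
  set f : ℤ → ℕ → Fin n → ℝ := fun t j => (A ^ j).mulVec (B.mulVec (d (t - 1 - j))) with hf
  have hkey : ∀ (t : ℤ) (j : ℕ), eNorm (f t j) ≤ K * r ^ j * eNorm (d (t - 1 - j)) :=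
    fun t j => hkeyv _ j
  -- part 1 : summability of the eNorms
  have hsumW : ∀ t : ℤ, Summable fun j : ℕ => K * r ^ j * eNorm (d (t - 1 - j)) := by
    intro t
    refine Summable.of_nonneg_of_le (fun j => mul_nonneg (by positivity) (eNorm_nonneg _))
      (fun j => ?_) (hgeo.mul_left (K * Real.sqrt Q))
    calc K * r ^ j * eNorm (d (t - 1 - j)) ≤ K * r ^ j * Real.sqrt Q :=
          mul_le_mul_of_nonneg_left (hdQ _) (by positivity)
      _ = K * Real.sqrt Q * r ^ j := by ring
  have hsum1 : ∀ t : ℤ, Summable fun j : ℕ => eNorm (f t j) := by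
    intro t
    exact Summable.of_nonneg_of_le (fun j => eNorm_nonneg _) (fun j => hkey t j) (hsumW t)
  -- summability of the vector-valued series
  have hsumv : ∀ t : ℤ, Summable (f t) := by
    intro t
    refine Summable.of_norm ?_
    exact Summable.of_nonneg_of_le (fun j => norm_nonneg _)
      (fun j => supnorm_le_eNorm _) (hsum1 t)
  set x : ℤ → Fin n → ℝ := fun t => ∑' j : ℕ, f t j with hx
  set W : ℤ → ℝ := fun t => ∑' j : ℕ, K * r ^ j * eNorm (d (t - 1 - j)) with hW
  have hW0 : ∀ t, 0 ≤ W t := fun t => tsum_nonneg fun j => mul_nonneg (by positivity) (eNorm_nonneg _)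
  -- triangle inequality for the tsum
  have hxW : ∀ t, eNorm (x t) ≤ W t := by
    intro t
    have hmap : (Eqv n).symm (x t) = ∑' j : ℕ, (Eqv n).symm (f t j) := by
      exact ((Eqv n).symm.toContinuousLinearMap.map_tsum (hsumv t))
    have h1 : eNorm (x t) ≤ ∑' j : ℕ, eNorm (f t j) := by
      rw [eNorm_eq, hmap]
      refine le_trans (norm_tsum_le_tsum_norm ?_) ?_
      · refine (hsum1 t).congr fun j => ?_
        rw [eNorm_eq]
      · refine le_of_eq (tsum_congr fun j => ?_)
        rw [eNorm_eq]
    exact le_trans h1 (Summable.tsum_le_tsum (fun j => hkey t j) (hsum1 t) (hsumW t))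
  -- the weighted square sums
  set V : ℤ → ℝ := fun t => ∑' j : ℕ, K * r ^ j * q (t - 1 - j) with hV
  have hsumVt : ∀ t : ℤ, Summable fun j : ℕ => K * r ^ j * q (t - 1 - j) := by
    intro t
    refine Summable.of_nonneg_of_le (fun j => mul_nonneg (by positivity) (hq0 _))
      (fun j => ?_) (hgeo.mul_left (K * Q))
    calc K * r ^ j * q (t - 1 - j) ≤ K * r ^ j * Q :=
          mul_le_mul_of_nonneg_left (hqQ _) (by positivity)
      _ = K * Q * r ^ j := by ring
  have hV0 : ∀ t, 0 ≤ V t := fun t => tsum_nonneg fun j => mul_nonneg (by positivity) (hq0 _)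
  -- Cauchy-Schwarz: (W t)^2 ≤ S * V t
  have hWV : ∀ t, (W t) ^ 2 ≤ S * V t := by
    intro t
    set g1 : ℕ → ℝ := fun j => Real.sqrt (K * r ^ j) with hg1
    set g2 : ℕ → ℝ := fun j => Real.sqrt (K * r ^ j) * eNorm (d (t - 1 - j)) with hg2
    have hg1sq : ∀ j, g1 j ^ 2 = K * r ^ j := fun j => Real.sq_sqrt (by positivity)
    have hg2sq : ∀ j, g2 j ^ 2 = K * r ^ j * q (t - 1 - j) := by
      intro j
      rw [hg2]
      rw [mul_pow, Real.sq_sqrt (by positivity : (0:ℝ) ≤ K * r ^ j), sq_eNorm]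
    have hg12 : ∀ j, g1 j * g2 j = K * r ^ j * eNorm (d (t - 1 - j)) := by
      intro j
      rw [hg1, hg2, ← mul_assoc, Real.mul_self_sqrt (by positivity)]
    have hs1 : Summable fun j => g1 j ^ 2 := by
      refine hKgeo.congr fun j => (hg1sq j).symm
    have hs2 : Summable fun j => g2 j ^ 2 := by
      refine (hsumVt t).congr fun j => (hg2sq j).symm
    have hs12 : Summable fun j => g1 j * g2 j := by
      refine (hsumW t).congr fun j => (hg12 j).symm
    have hcs := tsum_cauchy_schwarz g1 g2 hs1 hs2 hs12
    have hWt : W t = ∑' j, g1 j * g2 j := tsum_congr fun j => (hg12 j).symm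
    have hSt : (∑' j, g1 j ^ 2) = S := by
      rw [hS]; exact tsum_congr fun j => hg1sq j
    have hVt : (∑' j, g2 j ^ 2) = V t := by
      rw [hV]; exact tsum_congr fun j => hg2sq j
    rw [hWt]
    calc (∑' j, g1 j * g2 j) ^ 2
        ≤ (Real.sqrt (∑' j, g1 j ^ 2) * Real.sqrt (∑' j, g2 j ^ 2)) ^ 2 := by
          refine pow_le_pow_left₀ ?_ hcs 2
          rw [← hWt]; exact hW0 t
      _ = (∑' j, g1 j ^ 2) * (∑' j, g2 j ^ 2) := by
          rw [mul_pow, Real.sq_sqrt (tsum_nonneg fun j => sq_nonneg _),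
            Real.sq_sqrt (tsum_nonneg fun j => sq_nonneg _)]
      _ = S * V t := by rw [hSt, hVt]
  -- Fubini for the double sum
  set F : ℕ × ℤ → ℝ := fun p => K * r ^ p.1 * q (p.2 - 1 - p.1) with hF
  have hF0 : (0:ℕ × ℤ → ℝ) ≤ F := fun p => by
    simp only [hF, Pi.zero_apply]
    exact mul_nonneg (by positivity) (hq0 _)
  have hshift : ∀ j : ℕ, Summable (fun t : ℤ => q (t - 1 - j)) ∧
      (∑' t : ℤ, q (t - 1 - j)) = Q := by
    intro j
    have hco : ∀ t : ℤ, t - 1 - j = (Equiv.subRight ((1:ℤ) + j)) t := by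
      intro t; simp [Equiv.subRight]; ring
    constructor
    · refine (Summable.congr ?_ fun t => (congrArg q (hco t)).symm)
      exact ((Equiv.subRight ((1:ℤ) + j)).summable_iff (f := q)).mpr hd
    · calc (∑' t : ℤ, q (t - 1 - j)) = ∑' t : ℤ, q ((Equiv.subRight ((1:ℤ) + j)) t) :=
            tsum_congr fun t => congrArg q (hco t)
        _ = Q := by rw [hQ]; exact (Equiv.subRight ((1:ℤ) + j)).tsum_eq q
  have hFslice : ∀ j : ℕ, Summable fun t : ℤ => F (j, t) := by
    intro j
    exact ((hshift j).1.mul_left (K * r ^ j))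
  have hFsliceSum : ∀ j : ℕ, (∑' t : ℤ, F (j, t)) = K * r ^ j * Q := by
    intro j
    rw [hF]
    simp only
    rw [tsum_mul_left, (hshift j).2]
  have hFsums : Summable fun j : ℕ => ∑' t : ℤ, F (j, t) := by
    refine Summable.congr ?_ fun j => (hFsliceSum j).symm
    refine Summable.of_nonneg_of_le (fun j => mul_nonneg (by positivity) hQ0)
      (fun j => le_of_eq (by ring)) (hgeo.mul_left (K * Q))
  have hFsum : Summable F := (summable_prod_of_nonneg hF0).mpr ⟨hFslice, hFsums⟩
  set G : ℤ × ℕ → ℝ := F ∘ (Equiv.prodComm ℤ ℕ) with hG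
  have hGsum : Summable G := ((Equiv.prodComm ℤ ℕ).summable_iff (f := F)).mpr hFsum
  have hG0 : (0:ℤ × ℕ → ℝ) ≤ G := fun p => hF0 _
  have hGprod := (summable_prod_of_nonneg hG0).mp hGsum
  have hGt : ∀ t : ℤ, (fun j : ℕ => G (t, j)) = fun j : ℕ => K * r ^ j * q (t - 1 - j) := by
    intro t; rfl
  have hVsum : Summable V := by
    refine Summable.congr hGprod.2 fun t => ?_
    rfl
  have hVQ : (∑' t : ℤ, V t) = S * Q := by
    have h1 : (∑' t : ℤ, V t) = ∑' p : ℤ × ℕ, G p := by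
      rw [Summable.tsum_prod' hGsum hGprod.1]
      rfl
    have h2 : (∑' p : ℤ × ℕ, G p) = ∑' p : ℕ × ℤ, F p := (Equiv.prodComm ℤ ℕ).tsum_eq F
    have h3 : (∑' p : ℕ × ℤ, F p) = ∑' j : ℕ, ∑' t : ℤ, F (j, t) := Summable.tsum_prod' hFsum hFslice
    have h4 : (∑' j : ℕ, ∑' t : ℤ, F (j, t)) = ∑' j : ℕ, (K * r ^ j) * Q :=
      tsum_congr fun j => hFsliceSum j
    rw [h1, h2, h3, h4, tsum_mul_right, hS]
  -- MemL2 x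
  have hxt2 : ∀ t, x t ⬝ᵥ x t ≤ S * V t := by
    intro t
    calc x t ⬝ᵥ x t = eNorm (x t) ^ 2 := (sq_eNorm _).symm
      _ ≤ (W t) ^ 2 := pow_le_pow_left₀ (eNorm_nonneg _) (hxW t) 2
      _ ≤ S * V t := hWV t
  have hMemx : MemL2 x := by
    refine Summable.of_nonneg_of_le (fun t => dot_self_nonneg' _) (fun t => hxt2 t)
      (hVsum.mul_left S)
  refine ⟨hsum1, hMemx, ?_, ?_⟩
  · -- recurrence
    intro t
    have harg : ∀ j : ℕ, (t + 1 - 1 - (j:ℤ)) = t - j := by intro j; ring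
    have hgdef : (fun j : ℕ => (A ^ j).mulVec (B.mulVec (d (t + 1 - 1 - j))))
        = fun j : ℕ => (A ^ j).mulVec (B.mulVec (d (t - j))) := by
      funext j; rw [harg j]
    rw [hgdef]
    set g : ℕ → Fin n → ℝ := fun j => (A ^ j).mulVec (B.mulVec (d (t - j))) with hg
    have hgsum : Summable g := by
      have := hsumv (t + 1)
      refine this.congr fun j => ?_
      simp only [hf, hg]
      rw [harg j]
    have hsplit : (∑' j : ℕ, g j) = g 0 + ∑' j : ℕ, g (j + 1) := Summable.tsum_eq_zero_add hgsum
    have hg0 : g 0 = B.mulVec (d t) := by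
      simp [hg, Matrix.one_mulVec]
    have hgsucc : ∀ j : ℕ, g (j + 1) = A.mulVec (f t j) := by
      intro j
      have h1 : (t - ((j:ℤ) + 1)) = t - 1 - j := by ring
      simp only [hg, hf]
      rw [pow_succ']
      push_cast
      rw [h1, ← Matrix.mulVec_mulVec]
    have htail : (∑' j : ℕ, g (j + 1)) = A.mulVec (x t) := by
      have hL : A.mulVec (x t) = ∑' j : ℕ, A.mulVec (f t j) := by
        have hlin := (Matrix.mulVecLin A).toContinuousLinearMap.map_tsum (hsumv t)
        simpa [Matrix.mulVecLin_apply] using hlin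
      rw [hL]
      exact tsum_congr fun j => hgsucc j
    rw [hsplit, hg0, htail, add_comm]
  · -- the norm bound
    have hle : (∑' t : ℤ, x t ⬝ᵥ x t) ≤ S * (S * Q) := by
      calc (∑' t : ℤ, x t ⬝ᵥ x t) ≤ ∑' t : ℤ, S * V t :=
            Summable.tsum_le_tsum hxt2 hMemx (hVsum.mul_left S)
        _ = S * ∑' t : ℤ, V t := tsum_mul_left
        _ = S * (S * Q) := by rw [hVQ]
    have hrw : S * (S * Q) = S ^ 2 * Q := by ring
    calc l2Norm x ≤ Real.sqrt (S * (S * Q)) := Real.sqrt_le_sqrt hle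
      _ = S * Real.sqrt Q := by
          rw [hrw, Real.sqrt_mul (sq_nonneg _), Real.sqrt_sq hS0]
      _ = S * l2Norm d := by rw [l2Norm, hQ]
end
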